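/- Let π : X → X'' be an open continuous surjective homomorphism of Hausdorff topological abelian groups with kernel X'. If the Hausdorff completion cX of X is locally compact, then the induced map cX → cX'' on completions is an open surjection and the induced map cX' → cX is a closed embedding, with cX' canonically isomorphic to the kernel of cX → cX''. In particular the completed sequence cX' → cX → cX'' is a short exact sequence of topological abelian groups. -/

import Mathlib

open UniformSpace Topology

open Filter Set Uniformity in
/-- A locally compact uniform additive group is complete. -/
theorem aux_complete_of_locallyCompact {G : Type*} [AddCommGroup G] [UniformSpace G]
    [IsUniformAddGroup G] [LocallyCompactSpace G] : CompleteSpace G := by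
  constructor
  intro f hf
  haveI := hf.1
  obtain ⟨K, hKc, hK⟩ := exists_compact_mem_nhds (0 : G)
  have hU : {p : G × G | p.2 - p.1 ∈ K} ∈ 𝓤 G := by
    rw [uniformity_eq_comap_nhds_zero]
    exact preimage_mem_comap hK
  obtain ⟨t, htf, hts⟩ := (cauchy_iff.mp hf).2 _ hU
  obtain ⟨x₀, hx₀⟩ := hf.1.nonempty_of_mem htf
  have hsub : t ⊆ (fun z => x₀ + z) '' K := by
    intro y hy
    refine ⟨y - x₀, hts (Set.mk_mem_prod hx₀ hy), ?_⟩
    show x₀ + (y - x₀) = y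
    rw [← add_sub_assoc, add_sub_cancel_left]
  have hC : IsCompact ((fun z => x₀ + z) '' K) :=
    hKc.image (continuous_const.add continuous_id)
  obtain ⟨x, -, hx⟩ := hC (le_principal_iff.mpr (mem_of_superset htf hsub))
  exact ⟨x, le_nhds_of_cauchy_adhp hf hx⟩

open Filter Uniformity in
/-- An additive group hom between uniform additive groups which identifies neighborhoods of
zero is uniform inducing. -/
theorem aux_isUniformInducing {G H : Type*} [AddCommGroup G] [UniformSpace G] [IsUniformAddGroup G]
    [AddCommGroup H] [UniformSpace H] [IsUniformAddGroup H] (f : G →+ H)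
    (hf : comap f (𝓝 0) = 𝓝 0) : IsUniformInducing f := by
  constructor
  rw [uniformity_eq_comap_nhds_zero H, Filter.comap_comap,
    show ((fun p : H × H => p.2 - p.1) ∘ fun x : G × G => (f x.1, f x.2)) =
      (⇑f ∘ fun p : G × G => p.2 - p.1) from funext fun p => (map_sub f _ _).symm,
    ← Filter.comap_comap, hf, ← uniformity_eq_comap_nhds_zero G]

/-- Completion of a short exact sequence of Hausdorff topological abelian groups when the
completion of the middle term is locally compact: the completed quotient map is an open
surjection, the completed inclusion is a closed embedding, and its range is exactly the kernel
of the completed quotient map; i.e. `cX' → cX → cX''` is short exact. -/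
theorem completion_short_exact {X' X X'' : Type*}
    [AddCommGroup X'] [UniformSpace X'] [IsUniformAddGroup X'] [T2Space X']
    [AddCommGroup X] [UniformSpace X] [IsUniformAddGroup X] [T2Space X]
    [AddCommGroup X''] [UniformSpace X''] [IsUniformAddGroup X''] [T2Space X'']
    (i : X' →+ X) (π : X →+ X'')
    (hi : IsClosedEmbedding i) (hiker : Set.range i = (π ⁻¹' {0}))
    (hπcont : Continuous π) (hπopen : IsOpenMap π) (hπsurj : Function.Surjective π)
    (hloc : LocallyCompactSpace (Completion X)) :
    IsOpenMap (Completion.map (π : X → X'')) ∧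
      Function.Surjective (Completion.map (π : X → X'')) ∧
      IsClosedEmbedding (Completion.map (i : X' → X)) ∧
      Set.range (Completion.map (i : X' → X)) =
        (Completion.map (π : X → X'')) ⁻¹' {0} := by
  classical
  haveI := hloc
  have hπu : UniformContinuous (π : X → X'') :=
    uniformContinuous_addMonoidHom_of_continuous hπcont
  have hiu : IsUniformInducing (i : X' → X) := by
    apply aux_isUniformInducing
    have h := (hi.isInducing.nhds_eq_comap (0 : X')).symm
    rwa [map_zero] at h
  -- the closure of the image of `X'` in the completion of `X`
  set g : X' →+ Completion X := (Completion.toCompl (α := X)).comp i with hg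
  have hgu : IsUniformInducing (g : X' → Completion X) :=
    (Completion.isUniformInducing_coe X).comp hiu
  set N : AddSubgroup (Completion X) := g.range.topologicalClosure with hN
  have hNc : IsClosed (N : Set (Completion X)) := AddSubgroup.isClosed_topologicalClosure _
  have hNeq : (N : Set (Completion X)) = closure (Set.range (g : X' → Completion X)) := by
    simp [hN, AddSubgroup.topologicalClosure]
  -- The quotient of the completion of `X` by `N`
  letI instQ : UniformSpace (Completion X ⧸ N) := IsTopologicalAddGroup.rightUniformSpace _
  haveI : IsUniformAddGroup (Completion X ⧸ N) := isUniformAddGroup_of_addCommGroup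
  haveI : IsClosed (N : Set (Completion X)) := hNc
  haveI : T3Space (Completion X ⧸ N) := inferInstance
  haveI : LocallyCompactSpace (Completion X ⧸ N) := inferInstance
  haveI : CompleteSpace (Completion X ⧸ N) := aux_complete_of_locallyCompact
  set qc : Completion X →+ Completion X ⧸ N := QuotientAddGroup.mk' N with hqc
  have hqccont : Continuous (qc : Completion X → Completion X ⧸ N) := continuous_quot_mk
  have hqcopen : IsOpenMap (qc : Completion X → Completion X ⧸ N) :=
    QuotientAddGroup.isOpenMap_coe
  -- the natural map `X → Q`
  set ψ₀ : X →+ Completion X ⧸ N := qc.comp (Completion.toCompl (α := X)) with hψ₀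
  have hψ₀cont : Continuous (ψ₀ : X → Completion X ⧸ N) :=
    hqccont.comp Completion.continuous_toCompl
  have hker : π.ker ≤ ψ₀.ker := by
    intro x hx
    have hx' : π x ∈ ({0} : Set X'') := AddMonoidHom.mem_ker.mp hx
    obtain ⟨x', hx'eq⟩ : x ∈ Set.range (i : X' → X) := by rw [hiker]; exact hx'
    have : g x' ∈ N := AddSubgroup.le_topologicalClosure _ (AddMonoidHom.mem_range.mpr ⟨x', rfl⟩)
    have hgx : (g x' : Completion X) = (Completion.toCompl (α := X)) x := by
      simp [hg, hx'eq]
    rw [AddMonoidHom.mem_ker]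
    show qc ((Completion.toCompl (α := X)) x) = 0
    rw [← hgx]
    exact (QuotientAddGroup.eq_zero_iff _).mpr this
  -- the induced map `X'' → Q`
  set φ : X'' →+ Completion X ⧸ N :=
    π.liftOfRightInverse (Function.surjInv hπsurj) (Function.rightInverse_surjInv hπsurj)
      ⟨ψ₀, hker⟩ with hφ
  have hφπ : ∀ x : X, φ (π x) = ψ₀ x := fun x =>
    π.liftOfRightInverse_comp_apply _ _ ⟨ψ₀, hker⟩ x
  have hπquot : IsQuotientMap (π : X → X'') := hπopen.isQuotientMap hπcont hπsurj
  have hφcont : Continuous (φ : X'' → Completion X ⧸ N) := by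
    rw [hπquot.continuous_iff]
    exact Continuous.congr hψ₀cont fun x => (hφπ x).symm
  -- `φ` identifies neighborhoods of `0`
  have hcomap : Filter.comap (φ : X'' → Completion X ⧸ N) (𝓝 0) = 𝓝 0 := by
    refine le_antisymm ?_ ?_
    · rw [Filter.le_def]
      intro V hV
      have hU : (π : X → X'') ⁻¹' V ∈ 𝓝 (0 : X) :=
        hπcont.continuousAt.preimage_mem_nhds (by rw [map_zero]; exact hV)
      -- lift to a neighborhood in the completion
      have hnhds : 𝓝 (0 : X) =
          Filter.comap (Completion.toCompl (α := X)) (𝓝 ((Completion.toCompl (α := X)) 0)) :=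
        (Completion.isDenseInducing_toCompl X).isInducing.nhds_eq_comap 0
      rw [map_zero] at hnhds
      obtain ⟨W, hW, hWsub⟩ : ∃ W ∈ 𝓝 (0 : Completion X),
          (Completion.toCompl (α := X)) ⁻¹' W ⊆ (π : X → X'') ⁻¹' V := by
        rw [hnhds] at hU
        exact Filter.mem_comap.mp hU
      -- a small neighborhood
      obtain ⟨W₁, hW₁, hW₁sub⟩ : ∃ W₁ ∈ 𝓝 (0 : Completion X),
          ∀ a ∈ W₁, ∀ b ∈ W₁, a - b ∈ W := by
        have h := (continuous_sub : Continuous fun p : Completion X × Completion X => p.1 - p.2).tendsto ((0 : Completion X), 0)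
        rw [sub_zero] at h
        have h2 := h hW
        rw [Filter.mem_map, nhds_prod_eq, Filter.mem_prod_iff] at h2
        obtain ⟨A, hA, B, hB, hAB⟩ := h2
        exact ⟨A ∩ B, Filter.inter_mem hA hB,
          fun a ha b hb => hAB (Set.mk_mem_prod ha.1 hb.2)⟩
      obtain ⟨W₂, hsub₂, hopen₂, hmem₂⟩ := _root_.mem_nhds_iff.mp hW₁
      refine Filter.mem_comap.mpr ⟨(qc : Completion X → Completion X ⧸ N) '' W₂, ?_, ?_⟩
      · exact (hqcopen W₂ hopen₂).mem_nhds ⟨0, hmem₂, map_zero _⟩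
      · intro x'' hx''
        obtain ⟨x, rfl⟩ := hπsurj x''
        rw [Set.mem_preimage, hφπ] at hx''
        obtain ⟨w, hw, hqw⟩ := hx''
        -- `ι x - w ∈ N`
        have hn : (Completion.toCompl (α := X)) x - w ∈ N := by
          have h1 : ((w : Completion X) : Completion X ⧸ N) =
              (((Completion.toCompl (α := X)) x : Completion X) : Completion X ⧸ N) := hqw
          have h2 := (QuotientAddGroup.eq (s := N)).mp h1
          rwa [neg_add_eq_sub] at h2
        set n : Completion X := (Completion.toCompl (α := X)) x - w with hn'
        -- approximate `n` by an element of the range of `g`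
        have hnc : n ∈ closure (Set.range (g : X' → Completion X)) := by
          rw [← hNeq]; exact hn
        have hopen' : IsOpen ((fun z => n + z) '' W₂) :=
          (Homeomorph.addLeft n).isOpenMap W₂ hopen₂
        have hmem' : n ∈ (fun z => n + z) '' W₂ := ⟨0, hmem₂, add_zero n⟩
        obtain ⟨y, hy₁, hy₂⟩ := (mem_closure_iff.mp hnc) _ hopen' hmem'
        obtain ⟨w₂, hw₂, rfl⟩ := hy₁
        obtain ⟨x', hx'⟩ := hy₂
        -- now `x - i x'` maps into `W` hence into `π ⁻¹' V`
        have hkey : (Completion.toCompl (α := X)) (x - i x') ∈ W := by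
          have : (Completion.toCompl (α := X)) (x - i x') = w - w₂ := by
            rw [map_sub]
            have hgx' : (Completion.toCompl (α := X)) (i x') = n + w₂ := hx'
            rw [hgx', hn']
            abel
          rw [this]
          exact hW₁sub w (hsub₂ hw) w₂ (hsub₂ hw₂)
        have := hWsub hkey
        rw [Set.mem_preimage, map_sub] at this
        have hix' : π (i x') = 0 := by
          have : i x' ∈ Set.range (i : X' → X) := ⟨x', rfl⟩
          rw [hiker] at this
          exact this
        rwa [hix', sub_zero] at this
    · exact (hφcont.tendsto 0).le_comap.trans (le_of_eq (by rw [map_zero]))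
  have hφui : IsUniformInducing (φ : X'' → Completion X ⧸ N) := aux_isUniformInducing φ hcomap
  have hφu : UniformContinuous (φ : X'' → Completion X ⧸ N) := hφui.uniformContinuous
  have hφdense : DenseRange (φ : X'' → Completion X ⧸ N) := by
    have h1 : DenseRange ((qc : Completion X → Completion X ⧸ N) ∘
        (Completion.toCompl (α := X))) :=
      DenseRange.comp (Function.Surjective.denseRange QuotientAddGroup.mk_surjective)
        (Completion.denseRange_coe) hqccont
    have h2 : Set.range ((qc : Completion X → Completion X ⧸ N) ∘
        (Completion.toCompl (α := X))) ⊆ Set.range (φ : X'' → Completion X ⧸ N) := by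
      rintro _ ⟨x, rfl⟩
      exact ⟨π x, hφπ x⟩
    exact Dense.mono h2 h1
  -- the extension of `φ` to the completion
  set ψ : Completion X'' → Completion X ⧸ N := Completion.extension (φ : X'' → Completion X ⧸ N)
    with hψ
  have hψcont : Continuous ψ := Completion.continuous_extension
  have hψcoe : ∀ y : X'', ψ (y : Completion X'') = φ y := fun y => Completion.extension_coe hφu y
  have hψπ : ∀ z : Completion X, ψ (Completion.map (π : X → X'') z) = qc z := by
    have h : ψ ∘ Completion.map (π : X → X'') = (qc : Completion X → Completion X ⧸ N) :=
      Completion.ext (hψcont.comp Completion.continuous_map) hqccont fun a => by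
        rw [Function.comp_apply, Completion.map_coe hπu, hψcoe, hφπ]; rfl
    exact fun z => congrFun h z
  -- the inverse of `ψ`
  set χ : Completion X ⧸ N → Completion X'' :=
    (hφui.isDenseInducing hφdense).extend ((↑) : X'' → Completion X'') with hχ
  have hχu : UniformContinuous χ :=
    uniformContinuous_uniformly_extend hφui hφdense (Completion.uniformContinuous_coe X'')
  have hχφ : ∀ y : X'', χ (φ y) = (y : Completion X'') :=
    fun y => uniformly_extend_of_ind hφui hφdense (Completion.uniformContinuous_coe X'') y
  have hleft : ∀ z : Completion X'', χ (ψ z) = z := by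
    have h : χ ∘ ψ = id :=
      Completion.ext (hχu.continuous.comp hψcont) continuous_id fun a => by
        rw [Function.comp_apply, hψcoe, hχφ, id_eq]
    exact fun z => congrFun h z
  have hinj : Function.Injective ψ := fun a b h => by rw [← hleft a, ← hleft b, h]
  have hψ0 : ψ 0 = 0 := by
    have h0 : ((0 : X'') : Completion X'') = 0 := by
      exact_mod_cast map_zero (Completion.toCompl (α := X''))
    rw [← h0, hψcoe, map_zero]
  -- surjectivity of the completed projection
  have hsurj : Function.Surjective (Completion.map (π : X → X'')) := by
    intro y
    obtain ⟨u, hu⟩ := QuotientAddGroup.mk_surjective (ψ y)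
    refine ⟨u, hinj ?_⟩
    rw [hψπ u]
    exact hu
  -- openness of the completed projection
  have hopen : IsOpenMap (Completion.map (π : X → X'')) := by
    intro U hU
    have himg : Completion.map (π : X → X'') '' U =
        ψ ⁻¹' ((qc : Completion X → Completion X ⧸ N) '' U) := by
      ext z
      constructor
      · rintro ⟨u, hu, rfl⟩
        exact ⟨u, hu, (hψπ u).symm⟩
      · rintro ⟨u, hu, huz⟩
        have : ψ (Completion.map (π : X → X'') u) = ψ z := (hψπ u).trans huz
        exact ⟨u, hu, hinj this⟩
    rw [himg]
    exact (hqcopen U hU).preimage hψcont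
  -- now the closed embedding part
  set gN : X' → N := fun x =>
    ⟨g x, AddSubgroup.le_topologicalClosure _ (AddMonoidHom.mem_range.mpr ⟨x, rfl⟩)⟩ with hgN
  have hgNui : IsUniformInducing gN :=
    (IsUniformInducing.of_comp_iff isUniformEmbedding_subtype_val.isUniformInducing).mp hgu
  have hval : Subtype.val '' (Set.range gN) = Set.range (g : X' → Completion X) := by
    ext z
    constructor
    · rintro ⟨⟨z', hz'⟩, ⟨x, hx⟩, rfl⟩
      exact ⟨x, congrArg Subtype.val hx⟩
    · rintro ⟨x, rfl⟩
      exact ⟨gN x, ⟨x, rfl⟩, rfl⟩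
  have hgNdense : DenseRange gN := by
    rw [DenseRange, dense_iff_closure_eq,
      IsEmbedding.subtypeVal.isInducing.closure_eq_preimage_closure_image, hval, ← hNeq]
    ext p
    simp only [Set.mem_preimage, Set.mem_univ, iff_true, SetLike.mem_coe]
    exact p.2
  haveI : CompleteSpace N := hNc.completeSpace_coe
  set χ' : N → Completion X' :=
    (hgNui.isDenseInducing hgNdense).extend ((↑) : X' → Completion X') with hχ'
  have hχ'u : UniformContinuous χ' :=
    uniformContinuous_uniformly_extend hgNui hgNdense (Completion.uniformContinuous_coe X')
  have hχ'g : ∀ x : X', χ' (gN x) = (x : Completion X') :=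
    fun x => uniformly_extend_of_ind hgNui hgNdense (Completion.uniformContinuous_coe X') x
  have hiuc : UniformContinuous (i : X' → X) := hiu.uniformContinuous
  have hρcoe : ∀ x : X', Completion.map (i : X' → X) (x : Completion X') =
      ((i x : X) : Completion X) := fun x => Completion.map_coe hiuc x
  have hρmem : ∀ z : Completion X', Completion.map (i : X' → X) z ∈ N := by
    intro z
    refine Completion.induction_on z ?_ ?_
    · exact IsClosed.preimage Completion.continuous_map hNc
    · intro x
      rw [hρcoe]
      exact AddSubgroup.le_topologicalClosure _ (AddMonoidHom.mem_range.mpr ⟨x, rfl⟩)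
  set ρN : Completion X' → N := fun z => ⟨Completion.map (i : X' → X) z, hρmem z⟩ with hρN
  have hρNcont : Continuous ρN := Continuous.subtype_mk Completion.continuous_map _
  have hleft' : ∀ z : Completion X', χ' (ρN z) = z := by
    have h : χ' ∘ ρN = id :=
      Completion.ext (hχ'u.continuous.comp hρNcont) continuous_id fun x => by
        have : ρN (x : Completion X') = gN x := Subtype.ext (hρcoe x)
        rw [Function.comp_apply, this, hχ'g, id_eq]
    exact fun z => congrFun h z
  have hright' : ∀ n : N, ρN (χ' n) = n := by
    have h : ρN ∘ χ' = id := by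
      refine hgNdense.equalizer (hρNcont.comp hχ'u.continuous) continuous_id ?_
      funext x
      have : ρN (x : Completion X') = gN x := Subtype.ext (hρcoe x)
      simp only [Function.comp_apply, id_eq]
      rw [hχ'g, this]
    exact fun n => congrFun h n
  set homeo : Completion X' ≃ₜ N :=
    { toFun := ρN
      invFun := χ'
      left_inv := hleft'
      right_inv := hright'
      continuous_toFun := hρNcont
      continuous_invFun := hχ'u.continuous } with hhomeo
  have hclosed : IsClosedEmbedding (Completion.map (i : X' → X)) := by
    have h1 : IsClosedEmbedding (Subtype.val ∘ (homeo : Completion X' → N)) :=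
      hNc.isClosedEmbedding_subtypeVal.comp homeo.isClosedEmbedding
    exact h1
  have hrange : Set.range (Completion.map (i : X' → X)) = (N : Set (Completion X)) := by
    have h1 : Set.range (Completion.map (i : X' → X)) =
        Subtype.val '' Set.range (homeo : Completion X' → N) := by
      rw [← Set.range_comp]
      rfl
    rw [h1, homeo.surjective.range_eq, Set.image_univ, Subtype.range_coe]
  -- the kernel identification
  have hker' : (N : Set (Completion X)) = Completion.map (π : X → X'') ⁻¹' {0} := by
    ext z
    simp only [Set.mem_preimage, Set.mem_singleton_iff, SetLike.mem_coe]
    constructor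
    · intro hz
      have h1 : (qc z : Completion X ⧸ N) = 0 := (QuotientAddGroup.eq_zero_iff z).mpr hz
      apply hinj
      rw [hψπ z, h1, hψ0]
    · intro hz
      have h1 : (qc z : Completion X ⧸ N) = 0 := by
        rw [← hψπ z, hz, hψ0]
      exact (QuotientAddGroup.eq_zero_iff z).mp h1
  exact ⟨hopen, hsurj, hclosed, hrange.trans hker'⟩
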